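/- A formula θ of the language L is satisfiable in a TEM if and only if θ is satisfiable in a TEM whose labeling is state-based, i.e., a TEM in which r(n) = r'(n') implies L(r,n) = L(r',n') for all points (r,n) and (r',n'). -/

import Mathlib

namespace CMATEL

/-- A coalition is a nonempty set of agents. -/
def Coalition (Agt : Type) : Type := {A : Set Agt // A.Nonempty}

/-- The singleton coalition `{a}`. -/
def single {Agt : Type} (a : Agt) : Coalition Agt := ⟨{a}, Set.singleton_nonempty a⟩

/-- Formulas of the language L. -/
inductive Formula (Agt AP : Type) : Type where
  | atom : AP → Formula Agt AP
  | neg  : Formula Agt AP → Formula Agt AP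
  | and  : Formula Agt AP → Formula Agt AP → Formula Agt AP
  | next : Formula Agt AP → Formula Agt AP
  | untl : Formula Agt AP → Formula Agt AP → Formula Agt AP
  | dk   : Coalition Agt → Formula Agt AP → Formula Agt AP
  | ck   : Coalition Agt → Formula Agt AP → Formula Agt AP

variable {Agt AP : Type}

def Formula.imp (φ ψ : Formula Agt AP) : Formula Agt AP :=
  Formula.neg (Formula.and φ (Formula.neg ψ))
def Formula.or (φ ψ : Formula Agt AP) : Formula Agt AP :=
  Formula.neg (Formula.and (Formula.neg φ) (Formula.neg ψ))
def Formula.iff (φ ψ : Formula Agt AP) : Formula Agt AP :=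
  Formula.and (φ.imp ψ) (ψ.imp φ)

/-- The set of subformulas of a formula. -/
def Formula.subf : Formula Agt AP → Set (Formula Agt AP)
  | .atom p   => {Formula.atom p}
  | .neg φ    => insert (Formula.neg φ) φ.subf
  | .and φ ψ  => insert (Formula.and φ ψ) (φ.subf ∪ ψ.subf)
  | .next φ   => insert (Formula.next φ) φ.subf
  | .untl φ ψ => insert (Formula.untl φ ψ) (φ.subf ∪ ψ.subf)
  | .dk A φ   => insert (Formula.dk A φ) φ.subf
  | .ck A φ   => insert (Formula.ck A φ) φ.subf

/-- A temporal-epistemic system (TES): a nonempty set of states, a nonempty set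
of runs, and, for every coalition `A`, relations `R^D_A` and `R^C_A` on points,
where `R^C_A` is the reflexive transitive closure of the union of `R^D_{A'}`
over coalitions `A' ⊆ A`. -/
structure TES (Agt : Type) where
  State : Type
  stateNE : Nonempty State
  runs : Set (ℕ → State)
  runsNE : runs.Nonempty
  RD : Coalition Agt → ↥runs × ℕ → ↥runs × ℕ → Prop
  RC : Coalition Agt → ↥runs × ℕ → ↥runs × ℕ → Prop
  hRC : ∀ A : Coalition Agt, RC A =
    Relation.ReflTransGen (fun x y => ∃ A' : Coalition Agt, A'.1 ⊆ A.1 ∧ RD A' x y)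

abbrev TES.Point (G : TES Agt) : Type := ↥G.runs × ℕ

/-- Synchrony: epistemically related points have the same time component. -/
def TES.Synchronous (G : TES Agt) : Prop :=
  ∀ (A : Coalition Agt) (x y : G.Point), G.RD A x y → x.2 = y.2

/-- A TEF: each `R^D_A` is an equivalence, and `R^D_A = ⋂_{a ∈ A} R^D_{{a}}`. -/
def IsTEF (G : TES Agt) : Prop :=
  (∀ A : Coalition Agt, Equivalence (G.RD A)) ∧
  (∀ (A : Coalition Agt) (x y : G.Point), G.RD A x y ↔ ∀ a ∈ A.1, G.RD (single a) x y)

/-- A pseudo-TEF: each `R^D_A` is an equivalence, and `R^D_A ⊆ R^D_B` for `B ⊆ A`. -/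
def IsPseudoTEF (G : TES Agt) : Prop :=
  (∀ A : Coalition Agt, Equivalence (G.RD A)) ∧
  (∀ (A B : Coalition Agt), B.1 ⊆ A.1 → ∀ x y : G.Point, G.RD A x y → G.RD B x y)

/-- Satisfaction at points `R × ℕ`, given the epistemic relations and a labeling. -/
def Sat {R : Type} (RD RC : Coalition Agt → R × ℕ → R × ℕ → Prop)
    (lab : R × ℕ → Set AP) : R × ℕ → Formula Agt AP → Prop
  | x, .atom p => p ∈ lab x
  | x, .neg φ => ¬ Sat RD RC lab x φ
  | x, .and φ ψ => Sat RD RC lab x φ ∧ Sat RD RC lab x ψ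
  | x, .next φ => Sat RD RC lab (x.1, x.2 + 1) φ
  | x, .untl φ ψ => ∃ i, x.2 ≤ i ∧ Sat RD RC lab (x.1, i) ψ ∧
      ∀ j, x.2 ≤ j → j < i → Sat RD RC lab (x.1, j) φ
  | x, .dk A φ => ∀ y, RD A x y → Sat RD RC lab y φ
  | x, .ck A φ => ∀ y, RC A x y → Sat RD RC lab y φ

/-- A temporal-epistemic model: a TEF together with a labeling of points. -/
structure TEM (Agt AP : Type) where
  G : TES Agt
  lab : G.Point → Set AP
  isTEF : IsTEF G

def TEM.sat (M : TEM Agt AP) : M.G.Point → Formula Agt AP → Prop :=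
  Sat M.G.RD M.G.RC M.lab

/-- A pseudo temporal-epistemic model: a pseudo-TEF together with a labeling. -/
structure PseudoTEM (Agt AP : Type) where
  G : TES Agt
  lab : G.Point → Set AP
  isPTEF : IsPseudoTEF G

def PseudoTEM.sat (M : PseudoTEM Agt AP) : M.G.Point → Formula Agt AP → Prop :=
  Sat M.G.RD M.G.RC M.lab

/-- `A`-reachability: the reflexive transitive closure of single-agent steps
`R^D_{{a}}`, `a ∈ A`. -/
def AReach (G : TES Agt) (A : Coalition Agt) : G.Point → G.Point → Prop :=
  Relation.ReflTransGen (fun x y => ∃ a ∈ A.1, G.RD (single a) x y)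

/-- Fully expanded sets of formulas. -/
def FullyExpanded (Δ : Set (Formula Agt AP)) : Prop :=
  (∀ φ : Formula Agt AP, Formula.neg (Formula.neg φ) ∈ Δ → φ ∈ Δ) ∧
  (∀ φ ψ : Formula Agt AP, Formula.and φ ψ ∈ Δ → φ ∈ Δ ∧ ψ ∈ Δ) ∧
  (∀ φ ψ : Formula Agt AP, Formula.neg (Formula.and φ ψ) ∈ Δ →
      Formula.neg φ ∈ Δ ∨ Formula.neg ψ ∈ Δ) ∧
  (∀ φ : Formula Agt AP, Formula.neg (Formula.next φ) ∈ Δ →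
      Formula.next (Formula.neg φ) ∈ Δ) ∧
  (∀ φ ψ : Formula Agt AP, Formula.untl φ ψ ∈ Δ →
      ψ ∈ Δ ∨ (φ ∈ Δ ∧ Formula.next (Formula.untl φ ψ) ∈ Δ)) ∧
  (∀ φ ψ : Formula Agt AP, Formula.neg (Formula.untl φ ψ) ∈ Δ →
      (Formula.neg ψ ∈ Δ ∧ Formula.neg φ ∈ Δ) ∨
      (Formula.neg ψ ∈ Δ ∧ Formula.neg (Formula.next (Formula.untl φ ψ)) ∈ Δ)) ∧
  (∀ (A A' : Coalition Agt) (φ : Formula Agt AP), Formula.dk A φ ∈ Δ →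
      A.1 ⊆ A'.1 → Formula.dk A' φ ∈ Δ) ∧
  (∀ (A : Coalition Agt) (φ : Formula Agt AP), Formula.dk A φ ∈ Δ → φ ∈ Δ) ∧
  (∀ (A : Coalition Agt) (φ : Formula Agt AP), Formula.ck A φ ∈ Δ →
      ∀ a ∈ A.1, Formula.dk (single a) (Formula.and φ (Formula.ck A φ)) ∈ Δ) ∧
  (∀ (A : Coalition Agt) (φ : Formula Agt AP), Formula.neg (Formula.ck A φ) ∈ Δ →
      ∃ a ∈ A.1, Formula.neg (Formula.dk (single a) (Formula.and φ (Formula.ck A φ))) ∈ Δ) ∧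
  (∀ ψ ∈ Δ, ∀ (A : Coalition Agt) (φ : Formula Agt AP),
      Formula.dk A φ ∈ ψ.subf → Formula.dk A φ ∈ Δ ∨ Formula.neg (Formula.dk A φ) ∈ Δ)

/-- Hintikka-structure conditions (H1)–(H7) for a labeling `H` on a TES. -/
def IsHintikka (G : TES Agt) (H : G.Point → Set (Formula Agt AP)) : Prop :=
  (∀ (x : G.Point) (φ : Formula Agt AP), Formula.neg φ ∈ H x → φ ∉ H x) ∧
  (∀ x : G.Point, FullyExpanded (H x)) ∧
  (∀ (r : ↥G.runs) (n : ℕ) (φ : Formula Agt AP),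
      Formula.next φ ∈ H (r, n) → φ ∈ H (r, n + 1)) ∧
  (∀ (r : ↥G.runs) (n : ℕ) (φ ψ : Formula Agt AP), Formula.untl φ ψ ∈ H (r, n) →
      ∃ i, n ≤ i ∧ ψ ∈ H (r, i) ∧ ∀ j, n ≤ j → j < i → φ ∈ H (r, j)) ∧
  (∀ (x : G.Point) (A : Coalition Agt) (φ : Formula Agt AP),
      Formula.neg (Formula.dk A φ) ∈ H x →
      ∃ y : G.Point, G.RD A x y ∧ Formula.neg φ ∈ H y) ∧
  (∀ (x y : G.Point) (A : Coalition Agt), G.RD A x y →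
      ∀ (A' : Coalition Agt), A'.1 ⊆ A.1 → ∀ φ : Formula Agt AP,
        (Formula.dk A' φ ∈ H x ↔ Formula.dk A' φ ∈ H y)) ∧
  (∀ (x : G.Point) (A : Coalition Agt) (φ : Formula Agt AP),
      Formula.neg (Formula.ck A φ) ∈ H x →
      ∃ y : G.Point, G.RC A x y ∧ Formula.neg φ ∈ H y)

/-- A temporal-epistemic Hintikka structure. -/
structure TEHS (Agt AP : Type) where
  G : TES Agt
  H : G.Point → Set (Formula Agt AP)
  isH : IsHintikka G H

def TEHS.Synchronous (Hs : TEHS Agt AP) : Prop := Hs.G.Synchronous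

/-- Derived relation `R'^D_A`: the reflexive, symmetric and transitive closure of
the union of `R^D_B` over coalitions `B ⊇ A`. -/
def derivedRD (G : TES Agt) (A : Coalition Agt) : G.Point → G.Point → Prop :=
  Relation.EqvGen (fun x y => ∃ B : Coalition Agt, A.1 ⊆ B.1 ∧ G.RD B x y)

/-- Derived relation `R'^C_A`: the transitive closure of the union of
`R'^D_{{a}}` over `a ∈ A`. -/
def derivedRC (G : TES Agt) (A : Coalition Agt) : G.Point → G.Point → Prop :=
  Relation.TransGen (fun x y => ∃ a ∈ A.1, derivedRD G (single a) x y)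

/-- Derived labeling `L(r,n) = H(r,n) ∩ AP`. -/
def derivedLab (Hs : TEHS Agt AP) : Hs.G.Point → Set AP :=
  fun x => {p | Formula.atom p ∈ Hs.H x}

/-- Patently inconsistent set: contains a formula together with its negation. -/
def PatentlyInconsistent (Δ : Set (Formula Agt AP)) : Prop :=
  ∃ φ : Formula Agt AP, φ ∈ Δ ∧ Formula.neg φ ∈ Δ

/-- Minimal fully expanded extension. -/
def MinimalFEE (Γ Δ : Set (Formula Agt AP)) : Prop :=
  FullyExpanded Δ ∧ Γ ⊆ Δ ∧
  ¬ ∃ Δ' : Set (Formula Agt AP), FullyExpanded Δ' ∧ Γ ⊆ Δ' ∧ Δ' ⊂ Δ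

/-- A maximal path from `x` to `y`: consecutive points are related by `R^D_{A_i}`
and by no `R^D_B` for a strictly larger coalition `B`. -/
def IsMaximalPath (G : TES Agt) (m : ℕ) (pts : ℕ → G.Point) (cs : ℕ → Coalition Agt)
    (x y : G.Point) : Prop :=
  pts 0 = x ∧ pts m = y ∧ ∀ i < m,
    G.RD (cs i) (pts i) (pts (i + 1)) ∧
    ∀ B : Coalition Agt, (cs i).1 ⊂ B.1 → ¬ G.RD B (pts i) (pts (i + 1))

/-- A maximal path equals its reduction iff no two consecutive points lie on the
same run and no two consecutive coalition labels coincide. -/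
def IsReducedPath (G : TES Agt) (m : ℕ) (pts : ℕ → G.Point) (cs : ℕ → Coalition Agt) : Prop :=
  (∀ i < m, (pts i).1 ≠ (pts (i + 1)).1) ∧ (∀ i, i + 1 < m → cs i ≠ cs (i + 1))

/-- Forest-likeness: between any two points there is at most one reduced maximal path. -/
def ForestLike (G : TES Agt) : Prop :=
  ∀ (x y : G.Point) (m₁ : ℕ) (pts₁ : ℕ → G.Point) (cs₁ : ℕ → Coalition Agt)
    (m₂ : ℕ) (pts₂ : ℕ → G.Point) (cs₂ : ℕ → Coalition Agt),
    IsMaximalPath G m₁ pts₁ cs₁ x y → IsReducedPath G m₁ pts₁ cs₁ →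
    IsMaximalPath G m₂ pts₂ cs₂ x y → IsReducedPath G m₂ pts₂ cs₂ →
    m₁ = m₂ ∧ (∀ i ≤ m₁, pts₁ i = pts₂ i) ∧ (∀ i < m₁, cs₁ i = cs₂ i)

/-- Finite conjunction of a nonempty list of formulas. -/
def bigAnd : Formula Agt AP → List (Formula Agt AP) → Formula Agt AP
  | φ, [] => φ
  | φ, ψ :: l => Formula.and φ (bigAnd ψ l)

/-- `D_{{a}}(φ ∧ C_A φ)`. -/
def dform (A : Coalition Agt) (φ : Formula Agt AP) (a : Agt) : Formula Agt AP :=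
  Formula.dk (single a) (Formula.and φ (Formula.ck A φ))


/-- The run of points corresponding to a run `r`. -/
def liftRun (G : TES Agt) (r : ↥G.runs) : ℕ → G.Point := fun n => (r, n)

def liftedRuns (G : TES Agt) : Set (ℕ → G.Point) := Set.range (liftRun G)

def proj (G : TES Agt) (x : ↥(liftedRuns G) × ℕ) : G.Point := x.1.1 x.2

def sect (G : TES Agt) (p : G.Point) : ↥(liftedRuns G) × ℕ :=
  (⟨liftRun G p.1, ⟨p.1, rfl⟩⟩, p.2)

lemma proj_sect (G : TES Agt) (p : G.Point) : proj G (sect G p) = p := by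
  cases p; rfl

lemma sect_proj (G : TES Agt) (x : ↥(liftedRuns G) × ℕ) : sect G (proj G x) = x := by
  obtain ⟨⟨s, r, hr⟩, n⟩ := x
  subst hr
  rfl

noncomputable def runOf (G : TES Agt) (s : ↥(liftedRuns G)) : ↥G.runs := s.2.choose

lemma proj_mk (G : TES Agt) (s : ↥(liftedRuns G)) (m : ℕ) :
    proj G (s, m) = (runOf G s, m) := by
  show s.1 m = _
  rw [← s.2.choose_spec]
  rfl

/-- The lifted TES, whose states are the points of `G`. -/
@[reducible] def liftTES (G : TES Agt) : TES Agt where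
  State := G.Point
  stateNE := ⟨(⟨G.runsNE.choose, G.runsNE.choose_spec⟩, 0)⟩
  runs := liftedRuns G
  runsNE := ⟨liftRun G ⟨G.runsNE.choose, G.runsNE.choose_spec⟩, ⟨_, rfl⟩⟩
  RD := fun A x y => G.RD A (proj G x) (proj G y)
  RC := fun A => Relation.ReflTransGen
    (fun x y => ∃ A' : Coalition Agt, A'.1 ⊆ A.1 ∧ G.RD A' (proj G x) (proj G y))
  hRC := fun _ => rfl

lemma liftRC (G : TES Agt) (A : Coalition Agt) (x y : (liftTES G).Point) :
    (liftTES G).RC A x y ↔ G.RC A (proj G x) (proj G y) := by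
  rw [G.hRC]
  constructor
  · intro h
    exact Relation.ReflTransGen.lift (proj G)
      (fun a b hab => by obtain ⟨A', hsub, hrd⟩ := hab; exact ⟨A', hsub, hrd⟩) _ _ h
  · intro h
    have := Relation.ReflTransGen.lift
      (p := fun x y => ∃ A' : Coalition Agt, A'.1 ⊆ A.1 ∧ G.RD A' (proj G x) (proj G y))
      (sect G)
      (fun a b hab => by
        obtain ⟨A', hsub, hrd⟩ := hab
        exact ⟨A', hsub, by rwa [proj_sect, proj_sect]⟩) _ _ h
    rwa [Function.onFun, sect_proj, sect_proj] at this

lemma liftSat (M : TEM Agt AP) (φ : Formula Agt AP) (x : (liftTES M.G).Point) :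
    Sat (liftTES M.G).RD (liftTES M.G).RC (fun y => M.lab (proj M.G y)) x φ ↔
    Sat M.G.RD M.G.RC M.lab (proj M.G x) φ := by
  induction φ generalizing x with
  | atom p => exact Iff.rfl
  | neg φ ih => simp only [Sat, ih]
  | and φ ψ ih1 ih2 => simp only [Sat, ih1, ih2]
  | next φ ih =>
    obtain ⟨s, n⟩ := x
    simp only [Sat, ih, proj_mk]
  | untl φ ψ ih1 ih2 =>
    obtain ⟨s, n⟩ := x
    simp only [Sat, ih1, ih2, proj_mk]
  | dk A φ ih =>
    simp only [Sat]
    constructor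
    · intro h y' hy'
      have := h (sect M.G y')
        (show M.G.RD A (proj M.G x) (proj M.G (sect M.G y')) by rwa [proj_sect])
      rwa [ih, proj_sect] at this
    · intro h y hy
      rw [ih]
      exact h _ hy
  | ck A φ ih =>
    simp only [Sat]
    constructor
    · intro h y' hy'
      have := h (sect M.G y')
        ((liftRC M.G A x (sect M.G y')).mpr (by rw [proj_sect]; exact hy'))
      rwa [ih, proj_sect] at this
    · intro h y hy
      rw [ih]
      exact h _ ((liftRC M.G A x y).1 hy)

/-- The lifted TEM. -/
def liftTEM (M : TEM Agt AP) : TEM Agt AP where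
  G := liftTES M.G
  lab := fun x => M.lab (proj M.G x)
  isTEF := by
    refine ⟨fun A => ⟨fun x => (M.isTEF.1 A).refl _,
      fun h => (M.isTEF.1 A).symm h, fun h1 h2 => (M.isTEF.1 A).trans h1 h2⟩,
      fun A x y => M.isTEF.2 A (proj M.G x) (proj M.G y)⟩

/-- `θ` is satisfiable in a TEM iff `θ` is satisfiable in a TEM with a
state-based labeling. -/
theorem statement_19 {Agt AP : Type} [Fintype Agt] [Nonempty Agt]
    (θ : Formula Agt AP) :
    (∃ (M : TEM Agt AP) (x : M.G.Point), M.sat x θ) ↔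
    (∃ M : TEM Agt AP,
        (∀ (r r' : ↥M.G.runs) (n n' : ℕ), r.1 n = r'.1 n' → M.lab (r, n) = M.lab (r', n')) ∧
        ∃ x : M.G.Point, M.sat x θ) := by
  constructor
  · rintro ⟨M, x, hx⟩
    refine ⟨liftTEM M, ?_, sect M.G x, ?_⟩
    · intro r r' n n' h
      show M.lab (proj M.G (r, n)) = M.lab (proj M.G (r', n'))
      show M.lab (r.1 n) = M.lab (r'.1 n')
      rw [h]
    · refine (liftSat M θ (sect M.G x)).mpr ?_
      show Sat M.G.RD M.G.RC M.lab (proj M.G (sect M.G x)) θ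
      rw [proj_sect]
      exact hx
  · rintro ⟨M, _, x, hx⟩
    exact ⟨M, x, hx⟩

end CMATEL
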